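/- For any 4×4 matrix R̂ over a commutative ring satisfying R̂² = 2(R̂ - I), and for a function c on a multiplicative monoid, the Ansatz R̂(x) = I + c(x)·R̂ satisfies the parametrised Yang–Baxter equation R̂₁₂(x)R̂₂₃(xy)R̂₁₂(y) = R̂₂₃(y)R̂₁₂(xy)R̂₂₃(x) whenever c satisfies the functional equation c(x) + c(y) + 2c(x)c(y) = c(xy). -/
import Mathlib


open Matrix Kronecker

/-- `R̂ ⊗ I₂` as a matrix on `(V ⊗ V) ⊗ V`, where `Fin 4 ≃ Fin 2 × Fin 2`
is the standard row-major identification. -/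
def leg12 {α : Type*} [CommRing α] (M : Matrix (Fin 4) (Fin 4) α) :
    Matrix ((Fin 2 × Fin 2) × Fin 2) ((Fin 2 × Fin 2) × Fin 2) α :=
  (Matrix.reindex (finProdFinEquiv : Fin 2 × Fin 2 ≃ Fin 4).symm
    (finProdFinEquiv : Fin 2 × Fin 2 ≃ Fin 4).symm M) ⊗ₖ (1 : Matrix (Fin 2) (Fin 2) α)

/-- `I₂ ⊗ R̂` as a matrix on `(V ⊗ V) ⊗ V`, via the canonical associativity
equivalence `(V ⊗ V) ⊗ V ≃ V ⊗ (V ⊗ V)`. -/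
def leg23 {α : Type*} [CommRing α] (M : Matrix (Fin 4) (Fin 4) α) :
    Matrix ((Fin 2 × Fin 2) × Fin 2) ((Fin 2 × Fin 2) × Fin 2) α :=
  Matrix.reindex (Equiv.prodAssoc (Fin 2) (Fin 2) (Fin 2)).symm
    (Equiv.prodAssoc (Fin 2) (Fin 2) (Fin 2)).symm
    ((1 : Matrix (Fin 2) (Fin 2) α) ⊗ₖ
      (Matrix.reindex (finProdFinEquiv : Fin 2 × Fin 2 ≃ Fin 4).symm
        (finProdFinEquiv : Fin 2 × Fin 2 ≃ Fin 4).symm M))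

lemma leg12_mul {α : Type*} [CommRing α] (M N : Matrix (Fin 4) (Fin 4) α) :
    leg12 (M * N) = leg12 M * leg12 N := by
  simp [leg12, Matrix.reindex_apply, ← Matrix.mul_kronecker_mul,
    Matrix.submatrix_mul_equiv]

lemma leg23_mul {α : Type*} [CommRing α] (M N : Matrix (Fin 4) (Fin 4) α) :
    leg23 (M * N) = leg23 M * leg23 N := by
  simp [leg23, Matrix.reindex_apply, ← Matrix.mul_kronecker_mul,
    Matrix.submatrix_mul_equiv]

lemma leg12_add {α : Type*} [CommRing α] (M N : Matrix (Fin 4) (Fin 4) α) :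
    leg12 (M + N) = leg12 M + leg12 N := by
  simp [leg12, Matrix.submatrix_add, Matrix.add_kronecker]

lemma leg12_one {α : Type*} [CommRing α] :
    leg12 (1 : Matrix (Fin 4) (Fin 4) α) = 1 := by
  simp [leg12, Matrix.reindex_apply, Matrix.submatrix_one_equiv,
    Matrix.one_kronecker_one]

lemma leg23_add {α : Type*} [CommRing α] (M N : Matrix (Fin 4) (Fin 4) α) :
    leg23 (M + N) = leg23 M + leg23 N := by
  simp [leg23, Matrix.submatrix_add, Matrix.kronecker_add]

lemma leg23_one {α : Type*} [CommRing α] :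
    leg23 (1 : Matrix (Fin 4) (Fin 4) α) = 1 := by
  simp [leg23, Matrix.reindex_apply, Matrix.submatrix_one_equiv,
    Matrix.one_kronecker_one]

lemma leg12_sub {α : Type*} [CommRing α] (M N : Matrix (Fin 4) (Fin 4) α) :
    leg12 (M - N) = leg12 M - leg12 N := by
  have h := leg12_add (M - N) N
  rw [sub_add_cancel] at h
  exact eq_sub_of_add_eq h.symm

lemma leg23_sub {α : Type*} [CommRing α] (M N : Matrix (Fin 4) (Fin 4) α) :
    leg23 (M - N) = leg23 M - leg23 N := by
  have h := leg23_add (M - N) N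
  rw [sub_add_cancel] at h
  exact eq_sub_of_add_eq h.symm


theorem S03_baxterisation_general {α : Type*} [CommRing α] {M : Type*} [CommMonoid M]
    (Rhat : Matrix (Fin 4) (Fin 4) α)
    (hmin : Rhat ^ 2 = 2 • Rhat - 2 • (1 : Matrix (Fin 4) (Fin 4) α))
    (hbraid : leg12 Rhat * leg23 Rhat * leg12 Rhat = leg23 Rhat * leg12 Rhat * leg23 Rhat)
    (c : M → α)
    (hc : ∀ x y : M, c x + c y + 2 * (c x * c y) = c (x * y)) :
    ∀ x y : M,
      (1 + c x • leg12 Rhat) * (1 + c (x * y) • leg23 Rhat) * (1 + c y • leg12 Rhat)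
      = (1 + c y • leg23 Rhat) * (1 + c (x * y) • leg12 Rhat) * (1 + c x • leg23 Rhat) := by
  intro x y
  have hm : Rhat * Rhat = Rhat + Rhat - (1 + 1) := by
    rw [← pow_two, hmin, two_smul, two_smul]
  set A := leg12 Rhat with hA
  set B := leg23 Rhat with hB
  have hA2 : A * A = A + A - (1 + 1) := by
    rw [hA, ← leg12_mul, hm, leg12_sub, leg12_add, leg12_add, leg12_one]
  have hB2 : B * B = B + B - (1 + 1) := by
    rw [hB, ← leg23_mul, hm, leg23_sub, leg23_add, leg23_add, leg23_one]
  have habr : A * (B * A) = B * (A * B) := by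
    rw [← mul_assoc, ← mul_assoc, hbraid]
  have hcc := hc x y
  simp only [mul_add, add_mul, one_mul, mul_one, smul_mul_assoc, mul_smul_comm,
    smul_smul, mul_assoc]
  rw [hA2, hB2, habr, ← hcc]
  module
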